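/- arXiv:2004.14526 — 3 statements merged into one kernel-verified Lean document; each statement's English description precedes it below -/
import Mathlib

section
/- If X and Y are vertices of F_k(G) at distance 2 in F_k(G) with |X ∩ Y| = k−1, then there exist vertices x, y of G with X\Y = {x}, Y\X = {y}, and d_G(x,y) = 2. -/
/-- The `k`-token graph of `G`: vertices are the `k`-subsets of `V(G)`,
two subsets being adjacent iff their symmetric difference is an edge of `G`. -/
def tokenGraph {V : Type*} [DecidableEq V] (G : SimpleGraph V) (k : ℕ) :
    SimpleGraph {s : Finset V // s.card = k} where
  Adj X Y := ∃ a b, G.Adj a b ∧ symmDiff X.1 Y.1 = {a, b}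
  symm := by
    constructor
    rintro X Y ⟨a, b, hab, h⟩
    exact ⟨a, b, hab, by rwa [symmDiff_comm]⟩
  loopless := by
    constructor
    rintro X ⟨a, b, hab, h⟩
    rw [symmDiff_self] at h
    have : a ∈ (⊥ : Finset V) := h ▸ Finset.mem_insert_self a {b}
    simp at this

lemma tg_norm {V : Type*} [DecidableEq V] {X Z : Finset V} (hc : X.card = Z.card)
    {a b : V} (hab : a ≠ b) (h : symmDiff X Z = {a, b}) :
    (X \ Z = {a} ∧ Z \ X = {b}) ∨ (X \ Z = {b} ∧ Z \ X = {a}) := by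
  rw [symmDiff_def, Finset.sup_eq_union] at h
  have hcc : (X \ Z).card = (Z \ X).card := by
    have h1 := Finset.card_sdiff_add_card_inter X Z
    have h2 := Finset.card_sdiff_add_card_inter Z X
    rw [Finset.inter_comm] at h2; omega
  have hdisj : Disjoint (X \ Z) (Z \ X) := disjoint_sdiff_sdiff
  have hcard2 : (X \ Z).card + (Z \ X).card = 2 := by
    rw [← Finset.card_union_of_disjoint hdisj, h, Finset.card_pair hab]
  obtain ⟨u, hu⟩ := Finset.card_eq_one.mp (show (X \ Z).card = 1 by omega)
  obtain ⟨v, hv⟩ := Finset.card_eq_one.mp (show (Z \ X).card = 1 by omega)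
  rw [hu, hv] at h
  have huv : u ≠ v := by
    have h1 : u ∈ X \ Z := hu ▸ Finset.mem_singleton_self u
    have h2 : v ∈ Z \ X := hv ▸ Finset.mem_singleton_self v
    simp only [Finset.mem_sdiff] at h1 h2
    rintro rfl; exact h2.2 h1.1
  have hmu : u ∈ ({a, b} : Finset V) := h ▸ (by simp)
  have hmv : v ∈ ({a, b} : Finset V) := h ▸ (by simp)
  simp only [Finset.mem_insert, Finset.mem_singleton] at hmu hmv
  rcases hmu with rfl | rfl
  · rcases hmv with rfl | rfl
    · exact absurd rfl huv
    · exact Or.inl ⟨hu, hv⟩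
  · rcases hmv with rfl | rfl
    · exact Or.inr ⟨hu, hv⟩
    · exact absurd rfl huv

lemma tg_adj_elim {V : Type*} [DecidableEq V] {G : SimpleGraph V} {k : ℕ}
    {X Z : {s : Finset V // s.card = k}} (hXZ : (tokenGraph G k).Adj X Z) :
    ∃ a b, G.Adj a b ∧ X.1 \ Z.1 = {a} ∧ Z.1 \ X.1 = {b} := by
  obtain ⟨a, b, hab, hS⟩ := hXZ
  rcases tg_norm (X.2.trans Z.2.symm) hab.ne hS with ⟨h1, h2⟩ | ⟨h1, h2⟩
  exacts [⟨a, b, hab, h1, h2⟩, ⟨b, a, hab.symm, h1, h2⟩]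

lemma sdiff_singleton_facts {V : Type*} [DecidableEq V] {s t : Finset V} {a : V}
    (h : s \ t = {a}) : (a ∈ s ∧ a ∉ t) ∧ ∀ v ∈ s, v ∉ t → v = a := by
  constructor
  · have := h ▸ Finset.mem_singleton_self a
    simpa [Finset.mem_sdiff] using this
  · intro v hv hv'
    have : v ∈ s \ t := Finset.mem_sdiff.mpr ⟨hv, hv'⟩
    rw [h, Finset.mem_singleton] at this; exact this

theorem stmt5 {V : Type*} [DecidableEq V] (G : SimpleGraph V) (k : ℕ)
    (X Y : {s : Finset V // s.card = k})
    (h : (tokenGraph G k).dist X Y = 2)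
    (hZ : (X.1 ∩ Y.1).card = k - 1) :
    ∃ x y : V, X.1 \ Y.1 = {x} ∧ Y.1 \ X.1 = {y} ∧ G.dist x y = 2 := by
  have hXY : X ≠ Y := by rintro rfl; simp [SimpleGraph.dist_self] at h
  have hk : 1 ≤ k := by
    by_contra hk
    have hk0 : k = 0 := by omega
    apply hXY
    ext v
    have h1 : X.1 = ∅ := Finset.card_eq_zero.mp (X.2.trans hk0)
    have h2 : Y.1 = ∅ := Finset.card_eq_zero.mp (Y.2.trans hk0)
    rw [h1, h2]
  have h1 : (X.1 \ Y.1).card = 1 := by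
    have := Finset.card_sdiff_add_card_inter X.1 Y.1
    have hX := X.2
    omega
  have h2 : (Y.1 \ X.1).card = 1 := by
    have := Finset.card_sdiff_add_card_inter Y.1 X.1
    have hY := Y.2
    rw [Finset.inter_comm] at this
    omega
  obtain ⟨x, hx⟩ := Finset.card_eq_one.mp h1
  obtain ⟨y, hy⟩ := Finset.card_eq_one.mp h2
  refine ⟨x, y, hx, hy, ?_⟩
  obtain ⟨⟨hxX, hxY⟩, hxU⟩ := sdiff_singleton_facts hx
  obtain ⟨⟨hyY, hyX⟩, hyU⟩ := sdiff_singleton_facts hy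
  -- extract the middle vertex of a geodesic
  obtain ⟨p, hp⟩ := SimpleGraph.exists_walk_of_dist_ne_zero
    (by omega : (tokenGraph G k).dist X Y ≠ 0)
  rw [h] at hp
  obtain ⟨Z, hXZ, hZY⟩ : ∃ Z, (tokenGraph G k).Adj X Z ∧ (tokenGraph G k).Adj Z Y := by
    cases p with
    | nil => simp at hp
    | cons h1 q =>
      cases q with
      | nil => simp at hp
      | cons h2 r =>
        cases r with
        | nil => exact ⟨_, h1, h2⟩
        | cons h3 s => simp [SimpleGraph.Walk.length_cons] at hp
  obtain ⟨a, b, hab, haZ, hbZ⟩ := tg_adj_elim hXZ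
  obtain ⟨c, d, hcd, hcY, hdY⟩ := tg_adj_elim hZY
  obtain ⟨⟨haX, haZ'⟩, haU⟩ := sdiff_singleton_facts haZ
  obtain ⟨⟨hbZm, hbX⟩, hbU⟩ := sdiff_singleton_facts hbZ
  obtain ⟨⟨hcZ, hcY'⟩, hcU⟩ := sdiff_singleton_facts hcY
  obtain ⟨⟨hdYm, hdZ⟩, hdU⟩ := sdiff_singleton_facts hdY
  have ⟨w, hxw, hwy⟩ : ∃ w, G.Adj x w ∧ G.Adj w y := by
    by_cases hbc : b = c
    · subst hbc
      -- a = x, d = y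
      have had : a ≠ d := by
        rintro rfl
        -- then Y = X, contradiction via y
        by_cases hyZ : y ∈ Z.1
        · have : y = b := hbU y hyZ hyX
          exact hcY' (this ▸ hyY)
        · have : y = a := hdU y hyY hyZ
          exact hyX (this ▸ haX)
      have haY : a ∉ Y.1 := fun haY => had (hdU a haY haZ')
      have hxa : x = a := (hxU a haX haY).symm
      have hdX : d ∉ X.1 := fun hdX => had (haU d hdX hdZ).symm
      have hyd : y = d := (hyU d hdYm hdX).symm
      exact ⟨b, hxa ▸ hab, hyd ▸ hcd⟩
    · -- b ≠ c : then x = c, a = d, y = b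
      have hcX : c ∈ X.1 := by
        by_contra hcX
        exact hbc ((hbU c hcZ hcX).symm)
      have hxc : x = c := (hxU c hcX hcY').symm
      have had : a = d := by
        by_contra had
        have haY : a ∉ Y.1 := fun haY => had (hdU a haY haZ')
        have : a = x := hxU a haX haY
        exact haZ' (this ▸ hxc ▸ hcZ)
      have hbY : b ∈ Y.1 := by
        by_contra hbY
        exact hbc (hcU b hbZm hbY)
      have hyb : y = b := (hyU b hbY hbX).symm
      exact ⟨a, by rw [hxc, had]; exact hcd, hyb ▸ hab⟩
  have hle : G.dist x y ≤ 2 := by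
    have := SimpleGraph.dist_le (SimpleGraph.Walk.cons hxw (SimpleGraph.Walk.cons hwy SimpleGraph.Walk.nil))
    simpa using this
  have hne : x ≠ y := by rintro rfl; exact hyX hxX
  have hnadj : ¬ G.Adj x y := by
    intro hadj
    have hAdjXY : (tokenGraph G k).Adj X Y := by
      refine ⟨x, y, hadj, ?_⟩
      rw [symmDiff_def, Finset.sup_eq_union, hx, hy]
      ext v; simp [or_comm]
    rw [SimpleGraph.dist_eq_one_iff_adj.mpr hAdjXY] at h
    omega
  have hne1 : G.dist x y ≠ 1 := fun h1 => hnadj (SimpleGraph.dist_eq_one_iff_adj.mp h1)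
  have hne0 : G.dist x y ≠ 0 := by
    rw [SimpleGraph.dist_ne_zero_iff_ne_and_reachable]
    exact ⟨hne, ⟨SimpleGraph.Walk.cons hxw (SimpleGraph.Walk.cons hwy SimpleGraph.Walk.nil)⟩⟩
  omega
end

section
/- Let T be a tree, let X, Y be k-subsets of V(T) with |X ∩ Y| = k−1, X\Y = {x}, Y\X = {y}, and suppose xvy is a path in T with v ∉ X ∪ Y. Let Z = X ∩ Y, W = V(T)\(X∪Y), let η be the number of edges of T between Z and W, let a = |{w ∈ W\{v} : wx ∈ E(T)}|, b = |{z ∈ Z : zy ∈ E(T)}|, c = |{z ∈ Z : zx ∈ E(T)}|, d = |{w ∈ W\{v} : wy ∈ E(T)}|. Then deg_{F_k(T)}(X) = a + b + η + 1 and deg_{F_k(T)}(Y) = c + d + η + 1. -/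
section AuxStmt10

variable {V : Type*} [DecidableEq V] [Fintype V] (T : SimpleGraph V) [DecidableRel T.Adj]

set_option linter.unusedSectionVars false

lemma symmDiff_key (X : Finset V) (u w : V) (hu : u ∈ X) (hw : w ∉ X) :
    symmDiff X (insert w (X.erase u)) = {u, w} := by
  ext t
  simp only [symmDiff, Finset.sup_eq_union, Finset.mem_union, Finset.mem_sdiff,
    Finset.mem_insert, Finset.mem_erase, Finset.mem_singleton]
  by_cases h1 : t = u <;> by_cases h2 : t = w <;> subst_vars <;> simp_all

lemma deg_token (k : ℕ) (X : {s : Finset V // s.card = k}) :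
    Nat.card ((tokenGraph T k).neighborSet X) =
      ((X.1 ×ˢ X.1ᶜ).filter fun p => T.Adj p.1 p.2).card := by
  classical
  set P := (X.1 ×ˢ X.1ᶜ).filter fun p => T.Adj p.1 p.2 with hP
  have hmem : ∀ p : V × V, p ∈ P ↔ p.1 ∈ X.1 ∧ p.2 ∉ X.1 ∧ T.Adj p.1 p.2 := by
    intro p
    simp [hP, Finset.mem_filter, Finset.mem_product, and_assoc]
  have hcard : ∀ (u w : V), u ∈ X.1 → w ∉ X.1 → (insert w (X.1.erase u)).card = k := by
    intro u w hu hw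
    rw [Finset.card_insert_of_notMem (fun h => hw (Finset.mem_of_mem_erase h)),
      Finset.card_erase_of_mem hu, X.2]
    have : 1 ≤ k := by
      rw [← X.2]; exact Finset.card_pos.2 ⟨u, hu⟩
    omega
  have hf : ∀ p : V × V, (hp : p ∈ P) → (⟨insert p.2 (X.1.erase p.1), by
      obtain ⟨h1, h2, h3⟩ := (hmem p).1 hp; exact hcard _ _ h1 h2⟩ :
      {s : Finset V // s.card = k}) ∈ (tokenGraph T k).neighborSet X := by
    intro p hp
    obtain ⟨h1, h2, h3⟩ := (hmem p).1 hp
    exact ⟨p.1, p.2, h3, symmDiff_key X.1 p.1 p.2 h1 h2⟩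
  let f : {p : V × V // p ∈ P} → ((tokenGraph T k).neighborSet X) :=
    fun p => ⟨_, hf p.1 p.2⟩
  have hbij : Function.Bijective f := by
    constructor
    · rintro ⟨p, hp⟩ ⟨q, hq⟩ h
      obtain ⟨hp1, hp2, hp3⟩ := (hmem p).1 hp
      obtain ⟨hq1, hq2, hq3⟩ := (hmem q).1 hq
      have h' : insert p.2 (X.1.erase p.1) = insert q.2 (X.1.erase q.1) :=
        congrArg (fun z => z.1.1) h
      have hw : p.2 = q.2 := by
        have : p.2 ∈ insert q.2 (X.1.erase q.1) := h' ▸ Finset.mem_insert_self _ _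
        rcases Finset.mem_insert.1 this with h | h
        · exact h
        · exact absurd (Finset.mem_of_mem_erase h) hp2
      have hq1' : q.1 ∉ insert q.2 (X.1.erase q.1) := by
        simp only [Finset.mem_insert, Finset.mem_erase]
        rintro (h | h)
        · exact hq2 (h ▸ hq1)
        · exact h.1 rfl
      rw [← h'] at hq1'
      have hu : p.1 = q.1 := by
        by_contra hne
        exact hq1' (Finset.mem_insert.2 (Or.inr (Finset.mem_erase.2 ⟨fun h => hne h.symm, hq1⟩)))
      exact Subtype.ext (Prod.ext hu hw)
    · rintro ⟨Yn, hYn⟩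
      obtain ⟨α, β, hab, hs⟩ := hYn
      have hXY : (X.1 \ Yn.1).card = 1 ∧ (Yn.1 \ X.1).card = 1 := by
        have hd : Disjoint (X.1 \ Yn.1) (Yn.1 \ X.1) :=
          disjoint_sdiff_sdiff
        have hcc : (X.1 \ Yn.1).card = (Yn.1 \ X.1).card :=
          Finset.card_sdiff_comm (by rw [X.2, Yn.2])
        have hsum : (X.1 \ Yn.1).card + (Yn.1 \ X.1).card = 2 := by
          rw [← Finset.card_union_of_disjoint hd]
          have : X.1 \ Yn.1 ∪ Yn.1 \ X.1 = {α, β} := by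
            rw [← hs]; rfl
          rw [this, Finset.card_pair hab.ne]
        omega
      obtain ⟨u, hu⟩ := Finset.card_eq_one.1 hXY.1
      obtain ⟨w, hw⟩ := Finset.card_eq_one.1 hXY.2
      have huX : u ∈ X.1 ∧ u ∉ Yn.1 := by
        have := hu ▸ Finset.mem_singleton_self u
        exact Finset.mem_sdiff.1 this
      have hwX : w ∈ Yn.1 ∧ w ∉ X.1 := by
        have := hw ▸ Finset.mem_singleton_self w
        exact Finset.mem_sdiff.1 this
      have hadj : T.Adj u w := by
        have hpair : ({u, w} : Finset V) = {α, β} := by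
          rw [← hs]
          have : symmDiff X.1 Yn.1 = X.1 \ Yn.1 ∪ Yn.1 \ X.1 := rfl
          rw [this, hu, hw]; rfl
        have hu' : u ∈ ({α, β} : Finset V) := hpair ▸ Finset.mem_insert_self u {w}
        have hw' : w ∈ ({α, β} : Finset V) := hpair ▸ (Finset.mem_insert.2 (Or.inr (Finset.mem_singleton_self w)))
        have hne : u ≠ w := fun h => hwX.2 (h ▸ huX.1)
        have hu2 : u = α ∨ u = β := by simpa using hu'
        have hw2 : w = α ∨ w = β := by simpa using hw'
        rcases hu2 with rfl | rfl <;> rcases hw2 with rfl | rfl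
        · exact absurd rfl hne
        · exact hab
        · exact hab.symm
        · exact absurd rfl hne
      have hYeq : Yn.1 = insert w (X.1.erase u) := by
        ext t
        simp only [Finset.mem_insert, Finset.mem_erase]
        have h1 : t ∈ X.1 ∧ t ∉ Yn.1 ↔ t = u := by
          rw [← Finset.mem_sdiff, hu, Finset.mem_singleton]
        have h2 : t ∈ Yn.1 ∧ t ∉ X.1 ↔ t = w := by
          rw [← Finset.mem_sdiff, hw, Finset.mem_singleton]
        by_cases hX : t ∈ X.1 <;> by_cases hY : t ∈ Yn.1 <;>
          simp_all <;> tauto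
      have hpmem : (u, w) ∈ P := (hmem (u, w)).2 ⟨huX.1, hwX.2, hadj⟩
      refine ⟨⟨(u, w), hpmem⟩, ?_⟩
      apply Subtype.ext
      apply Subtype.ext
      exact hYeq.symm
  rw [← Nat.card_eq_of_bijective f hbij, Nat.card_eq_finsetCard]

lemma card_filter_prod (A B : Finset V) :
    ((A ×ˢ B).filter fun p => T.Adj p.1 p.2).card
      = ∑ u ∈ A, (B.filter fun w => T.Adj u w).card := by
  rw [Finset.card_eq_sum_card_fiberwise (f := Prod.fst) (t := A)
    (fun p hp => (Finset.mem_product.1 (Finset.mem_filter.1 hp).1).1)]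
  refine Finset.sum_congr rfl fun u hu => ?_
  refine Finset.card_bij' (fun p _ => p.2) (fun b hb => (u, b)) ?_ ?_ ?_ ?_
  · intro p hp
    simp only [Finset.mem_filter, Finset.mem_product] at hp ⊢
    obtain ⟨⟨⟨h1, h2⟩, h3⟩, h4⟩ := hp
    exact ⟨h2, h4 ▸ h3⟩
  · intro b hb
    obtain ⟨h1, h2⟩ := Finset.mem_filter.1 hb
    exact Finset.mem_filter.2 ⟨Finset.mem_filter.2 ⟨Finset.mem_product.2 ⟨hu, h1⟩, h2⟩, rfl⟩
  · intro p hp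
    have h1 := (Finset.mem_filter.1 hp).2
    exact Prod.ext h1.symm rfl
  · intro b hb
    rfl

lemma eta_eq (Z W : Finset V) (hZW : Disjoint Z W) :
    (T.edgeFinset.filter fun e => ∃ z ∈ Z, ∃ w ∈ W, e = s(z, w)).card
      = ((Z ×ˢ W).filter fun p => T.Adj p.1 p.2).card := by
  symm
  refine Finset.card_bij (fun p _ => s(p.1, p.2)) ?_ ?_ ?_
  · intro p hp
    simp only [Finset.mem_filter, Finset.mem_product] at hp
    exact Finset.mem_filter.2 ⟨SimpleGraph.mem_edgeFinset.2 hp.2,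
      ⟨p.1, hp.1.1, p.2, hp.1.2, rfl⟩⟩
  · intro p hp q hq h
    simp only [Finset.mem_filter, Finset.mem_product] at hp hq
    rcases Sym2.eq_iff.1 h with ⟨h1, h2⟩ | ⟨h1, h2⟩
    · exact Prod.ext h1 h2
    · exact absurd hq.1.2 (Finset.disjoint_left.1 hZW (h1 ▸ hp.1.1))
  · intro e he
    obtain ⟨he1, z, hz, w, hw, rfl⟩ := Finset.mem_filter.1 he
    have hadj : T.Adj z w := SimpleGraph.mem_edgeFinset.1 he1
    exact ⟨(z, w), Finset.mem_filter.2 ⟨Finset.mem_product.2 ⟨hz, hw⟩, hadj⟩, rfl⟩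

lemma count_aux (Xs Z W : Finset V) (x y v : V)
    (hXZ : Xs = insert x Z) (hxZ : x ∉ Z)
    (hXc : Xsᶜ = insert y W) (hyW : y ∉ W) (hvW : v ∈ W)
    (hxy : ¬ T.Adj x y) (hxv : T.Adj x v) :
    ((Xs ×ˢ Xsᶜ).filter fun p => T.Adj p.1 p.2).card
      = ((W.erase v).filter fun w => T.Adj w x).card
        + (Z.filter fun z => T.Adj z y).card
        + ((Z ×ˢ W).filter fun p => T.Adj p.1 p.2).card + 1 := by
  rw [card_filter_prod, hXc, hXZ, Finset.sum_insert hxZ]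
  have hx_term : ((insert y W).filter fun w => T.Adj x w).card
      = ((W.erase v).filter fun w => T.Adj w x).card + 1 := by
    rw [Finset.filter_insert, if_neg hxy]
    conv_lhs => rw [← Finset.insert_erase hvW]
    rw [Finset.filter_insert, if_pos hxv, Finset.card_insert_of_notMem
      (fun hm => (Finset.mem_erase.1 (Finset.mem_filter.1 hm).1).1 rfl)]
    have hcc : Finset.filter (fun w => T.Adj x w) (W.erase v)
        = Finset.filter (fun w => T.Adj w x) (W.erase v) :=
      Finset.filter_congr fun w _ => T.adj_comm x w
    rw [hcc]
  have hz_term : ∀ z ∈ Z, ((insert y W).filter fun w => T.Adj z w).card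
      = (W.filter fun w => T.Adj z w).card + (if T.Adj z y then 1 else 0) := by
    intro z hz
    rw [Finset.filter_insert]
    by_cases h : T.Adj z y
    · rw [if_pos h, if_pos h,
        Finset.card_insert_of_notMem (fun hm => hyW (Finset.mem_filter.1 hm).1)]
    · rw [if_neg h, if_neg h, add_zero]
  rw [Finset.sum_congr rfl hz_term, Finset.sum_add_distrib, ← Finset.card_filter,
    hx_term, ← card_filter_prod]
  omega


end AuxStmt10

theorem stmt10 {V : Type*} [DecidableEq V] [Fintype V] (T : SimpleGraph V)
    [DecidableRel T.Adj] (hT : T.IsTree) (k : ℕ) (hk : 2 ≤ k)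
    (hk' : k ≤ Fintype.card V - 2)
    (X Y : {s : Finset V // s.card = k}) (x y v : V)
    (hZcard : (X.1 ∩ Y.1).card = k - 1)
    (hx : X.1 \ Y.1 = {x}) (hy : Y.1 \ X.1 = {y})
    (hxv : T.Adj x v) (hvy : T.Adj v y) (hvXY : v ∉ X.1 ∪ Y.1)
    (Z W : Finset V) (hZ : Z = X.1 ∩ Y.1) (hW : W = (X.1 ∪ Y.1)ᶜ)
    (η a b c d : ℕ)
    (hη : η = (T.edgeFinset.filter fun e => ∃ z ∈ Z, ∃ w ∈ W, e = s(z, w)).card)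
    (ha : a = ((W.erase v).filter fun w => T.Adj w x).card)
    (hb : b = (Z.filter fun z => T.Adj z y).card)
    (hc : c = (Z.filter fun z => T.Adj z x).card)
    (hd : d = ((W.erase v).filter fun w => T.Adj w y).card) :
    Nat.card ((tokenGraph T k).neighborSet X) = a + b + η + 1 ∧
    Nat.card ((tokenGraph T k).neighborSet Y) = c + d + η + 1 := by
  classical
  have hmemx : ∀ t, t ∈ X.1 ∧ t ∉ Y.1 ↔ t = x := fun t => by
    rw [← Finset.mem_sdiff, hx, Finset.mem_singleton]
  have hmemy : ∀ t, t ∈ Y.1 ∧ t ∉ X.1 ↔ t = y := fun t => by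
    rw [← Finset.mem_sdiff, hy, Finset.mem_singleton]
  have hxX : x ∈ X.1 := ((hmemx x).2 rfl).1
  have hxY : x ∉ Y.1 := ((hmemx x).2 rfl).2
  have hyY : y ∈ Y.1 := ((hmemy y).2 rfl).1
  have hyX : y ∉ X.1 := ((hmemy y).2 rfl).2
  have hvX : v ∉ X.1 := fun h => hvXY (Finset.mem_union_left _ h)
  have hvY : v ∉ Y.1 := fun h => hvXY (Finset.mem_union_right _ h)
  have hmemW : ∀ t, t ∈ W ↔ t ∉ X.1 ∧ t ∉ Y.1 := fun t => by
    rw [hW, Finset.mem_compl, Finset.mem_union]; tauto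
  have hmemZ : ∀ t, t ∈ Z ↔ t ∈ X.1 ∧ t ∈ Y.1 := fun t => by
    rw [hZ, Finset.mem_inter]
  have hvW : v ∈ W := (hmemW v).2 ⟨hvX, hvY⟩
  have hyW : y ∉ W := fun h => ((hmemW y).1 h).2 hyY
  have hxW : x ∉ W := fun h => ((hmemW x).1 h).1 hxX
  have hxZ : x ∉ Z := fun h => hxY ((hmemZ x).1 h).2
  have hyZ : y ∉ Z := fun h => hyX ((hmemZ y).1 h).1
  have hZW : Disjoint Z W := Finset.disjoint_left.2
    (fun {t} ht hw => ((hmemW t).1 hw).1 ((hmemZ t).1 ht).1)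
  have hXZ : X.1 = insert x Z := by
    ext t
    rw [Finset.mem_insert, hmemZ]
    constructor
    · intro ht
      by_cases hY : t ∈ Y.1
      · exact Or.inr ⟨ht, hY⟩
      · exact Or.inl ((hmemx t).1 ⟨ht, hY⟩)
    · rintro (rfl | ⟨h, _⟩)
      exacts [hxX, h]
  have hYZ : Y.1 = insert y Z := by
    ext t
    rw [Finset.mem_insert, hmemZ]
    constructor
    · intro ht
      by_cases hX : t ∈ X.1
      · exact Or.inr ⟨hX, ht⟩
      · exact Or.inl ((hmemy t).1 ⟨ht, hX⟩)
    · rintro (rfl | ⟨_, h⟩)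
      exacts [hyY, h]
  have hXc : X.1ᶜ = insert y W := by
    ext t
    rw [Finset.mem_compl, Finset.mem_insert, hmemW]
    constructor
    · intro ht
      by_cases hY : t ∈ Y.1
      · exact Or.inl ((hmemy t).1 ⟨hY, ht⟩)
      · exact Or.inr ⟨ht, hY⟩
    · rintro (rfl | ⟨h, _⟩)
      exacts [hyX, h]
  have hYc : Y.1ᶜ = insert x W := by
    ext t
    rw [Finset.mem_compl, Finset.mem_insert, hmemW]
    constructor
    · intro ht
      by_cases hX : t ∈ X.1
      · exact Or.inl ((hmemx t).1 ⟨hX, ht⟩)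
      · exact Or.inr ⟨hX, ht⟩
    · rintro (rfl | ⟨_, h⟩)
      exacts [hxY, h]
  have hxy : x ≠ y := fun h => hyX (h ▸ hxX)
  have hnadj : ∀ x' y' v' : V, x' ≠ y' → T.Adj x' v' → T.Adj v' y' → ¬ T.Adj x' y' := by
    intro x' y' v' hne h1 h2 hadj
    have hp1 : (SimpleGraph.Walk.cons hadj SimpleGraph.Walk.nil : T.Walk x' y').IsPath := by
      simp [SimpleGraph.Walk.cons_isPath_iff, hne]
    have hp2 : (SimpleGraph.Walk.cons h1 (SimpleGraph.Walk.cons h2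
        SimpleGraph.Walk.nil) : T.Walk x' y').IsPath := by
      simp [SimpleGraph.Walk.cons_isPath_iff, hne, h1.ne, h2.ne]
    have := (hT.existsUnique_path x' y').unique hp1 hp2
    have hlen := congrArg SimpleGraph.Walk.length this
    simp [SimpleGraph.Walk.length_cons] at hlen
  have hnxy : ¬ T.Adj x y := hnadj x y v hxy hxv hvy
  have hnyx : ¬ T.Adj y x := fun h => hnxy h.symm
  constructor
  · rw [deg_token, ha, hb, hη, eta_eq T Z W hZW,
      count_aux T X.1 Z W x y v hXZ hxZ hXc hyW hvW hnxy hxv]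
  · rw [deg_token, hc, hd, hη, eta_eq T Z W hZW,
      count_aux T Y.1 Z W y x v hYZ hyZ hYc hxW hvW hnyx hvy.symm]
    omega
end

section
/- If G is a connected graph of order n and 1 ≤ k ≤ n−1, then the k-token graph F_k(G) is connected. -/
open Finset

section aux

variable {V : Type*} [DecidableEq V]

lemma mv_card {X : Finset V} {a b : V} (ha : a ∈ X) (hb : b ∉ X) :
    (insert b (X.erase a)).card = X.card := by
  rw [card_insert_of_notMem (fun h => hb (mem_of_mem_erase h)),
    card_erase_of_mem ha, Nat.sub_add_cancel (card_pos.mpr ⟨a, ha⟩)]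

lemma symmDiff_mv {X : Finset V} {a b : V} (ha : a ∈ X) (hb : b ∉ X) :
    symmDiff X (insert b (X.erase a)) = {a, b} := by
  have hab : a ≠ b := fun h => hb (h ▸ ha)
  ext x
  simp only [Finset.mem_symmDiff, mem_insert, mem_erase, Finset.mem_singleton]
  by_cases hxa : x = a <;> by_cases hxb : x = b <;> simp_all

lemma mv_adj {V : Type*} [DecidableEq V] (G : SimpleGraph V) (k : ℕ)
    (X Y : {s : Finset V // s.card = k}) {a b : V} (ha : a ∈ X.1) (hb : b ∉ X.1)
    (hab : G.Adj a b) (hY : Y.1 = insert b (X.1.erase a)) :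
    (tokenGraph G k).Adj X Y :=
  ⟨a, b, hab, by rw [hY, symmDiff_mv ha hb]⟩

lemma reach_mv (G : SimpleGraph V) (k : ℕ) {a b : V} (w : G.Walk a b) :
    ∀ (X Y : {s : Finset V // s.card = k}), a ∈ X.1 → b ∉ X.1 →
      Y.1 = insert b (X.1.erase a) → (tokenGraph G k).Reachable X Y := by
  induction w with
  | nil => intro X Y ha hb _; exact absurd ha hb
  | @cons a c b h p IH =>
    intro X Y ha hb hY
    by_cases hcX : c ∈ X.1
    · by_cases hca : c = a
      · exact IH X Y (hca ▸ hcX) hb (by rw [hY, hca])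
      · have hcb : c ≠ b := fun h' => hb (h' ▸ hcX)
        have hab : a ≠ b := fun h' => hb (h' ▸ ha)
        have hZcard : (insert b (X.1.erase c)).card = k := by rw [mv_card hcX hb, X.2]
        set Z : {s : Finset V // s.card = k} := ⟨insert b (X.1.erase c), hZcard⟩ with hZ
        have h1 : (tokenGraph G k).Reachable X Z := IH X Z hcX hb rfl
        have haZ : a ∈ Z.1 := by
          simp only [hZ, mem_insert, mem_erase]
          exact Or.inr ⟨Ne.symm hca, ha⟩
        have hcZ : c ∉ Z.1 := by
          simp only [hZ, mem_insert, mem_erase]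
          rintro (h' | ⟨h', _⟩) <;> simp_all
        have h2 : (tokenGraph G k).Adj Z Y := by
          refine mv_adj G k Z Y haZ hcZ h ?_
          rw [hY, hZ]
          ext x
          simp only [mem_insert, mem_erase]
          by_cases hxa : x = a <;> by_cases hxb : x = b <;> by_cases hxc : x = c <;>
            simp_all
        exact h1.trans h2.reachable
    · by_cases hcb : c = b
      · exact (mv_adj G k X Y ha hb (hcb ▸ h) hY).reachable
      · have hZcard : (insert c (X.1.erase a)).card = k := by rw [mv_card ha hcX, X.2]
        set Z : {s : Finset V // s.card = k} := ⟨insert c (X.1.erase a), hZcard⟩ with hZ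
        have h1 : (tokenGraph G k).Adj X Z := mv_adj G k X Z ha hcX h rfl
        have hcZ : c ∈ Z.1 := mem_insert_self _ _
        have hbZ : b ∉ Z.1 := by
          simp only [hZ, mem_insert, mem_erase]
          rintro (h' | ⟨_, h'⟩)
          · exact hcb h'.symm
          · exact hb h'
        have h2 : (tokenGraph G k).Reachable Z Y := by
          refine IH Z Y hcZ hbZ ?_
          rw [hY, hZ]
          simp only
          rw [Finset.erase_insert (fun h' => hcX (mem_of_mem_erase h'))]
        exact h1.reachable.trans h2

end aux

theorem stmt17 {V : Type*} [DecidableEq V] [Fintype V] (G : SimpleGraph V)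
    (hG : G.Connected) (k : ℕ) (hk : 1 ≤ k) (hk' : k ≤ Fintype.card V - 1) :
    (tokenGraph G k).Connected := by
  have key : ∀ n (X Y : {s : Finset V // s.card = k}), (X.1 \ Y.1).card = n →
      (tokenGraph G k).Reachable X Y := by
    intro n
    induction n using Nat.strong_induction_on with
    | _ n IH =>
      intro X Y hn
      rcases eq_or_ne X Y with rfl | hne
      · exact SimpleGraph.Reachable.refl X
      · have hcards : X.1.card = Y.1.card := by rw [X.2, Y.2]
        have hXY : (X.1 \ Y.1).Nonempty := by
          rw [Finset.sdiff_nonempty]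
          intro hsub
          exact hne (Subtype.ext (Finset.eq_of_subset_of_card_le hsub hcards.ge))
        have hYX : (Y.1 \ X.1).Nonempty := by
          rw [Finset.sdiff_nonempty]
          intro hsub
          exact hne (Subtype.ext (Finset.eq_of_subset_of_card_le hsub hcards.le).symm)
        obtain ⟨a, haX⟩ := hXY
        obtain ⟨b, hbY⟩ := hYX
        rw [Finset.mem_sdiff] at haX hbY
        obtain ⟨w⟩ := hG.preconnected a b
        have hZcard : (insert b (X.1.erase a)).card = k := by
          rw [mv_card haX.1 hbY.2, X.2]
        set Z : {s : Finset V // s.card = k} := ⟨insert b (X.1.erase a), hZcard⟩ with hZ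
        have h1 : (tokenGraph G k).Reachable X Z := reach_mv G k w X Z haX.1 hbY.2 rfl
        have hdiff : Z.1 \ Y.1 = (X.1 \ Y.1).erase a := by
          ext x
          simp only [hZ, mem_insert, mem_erase, Finset.mem_sdiff]
          by_cases hxa : x = a <;> by_cases hxb : x = b <;> simp_all [hbY.1]
        have hlt : (Z.1 \ Y.1).card < n := by
          rw [hdiff, Finset.card_erase_of_mem (Finset.mem_sdiff.mpr haX), hn]
          have : 0 < n := hn ▸ Finset.card_pos.mpr ⟨a, Finset.mem_sdiff.mpr haX⟩
          omega
        exact h1.trans (IH _ hlt Z Y rfl)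
  have hne : Nonempty {s : Finset V // s.card = k} := by
    obtain ⟨t, -, ht⟩ := Finset.exists_subset_card_eq
      (by rw [Finset.card_univ]; exact le_trans hk' (Nat.sub_le _ _) : k ≤ (Finset.univ : Finset V).card)
    exact ⟨⟨t, ht⟩⟩
  exact SimpleGraph.Connected.mk (fun X Y => key _ X Y rfl)
end
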